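/- Let 0 ≤ μ < L, β₀ > 0, ε ≥ 0, let θ₀, θ₁ ∈ (0,1] with θ₁ ≥ μ/L, and let ϑ₀, ϑ₁ > 0 satisfy (1 − θ₁)/ϑ₁ = 1/ϑ₀. Let (x*, λ*) ∈ ℝ^{m×n} × ℝ^{m×n} satisfy Πx* = 0 and ∇f(x*) + Πλ* = 0. Given x⁻, x ∈ ℝ^{m×n}, define y = x + ((Lθ₁ − μ)/(L − μ))·((1 − θ₀)/θ₀)·(x − x⁻) and z = y − (1/L)∇f(y). Suppose x⁺, δ ∈ ℝ^{m×n} satisfy ‖δ‖_F ≤ √(2ε/L), (β₀/ϑ₁)‖Πδ‖²_F ≤ 2ε, and L(x⁺ − z + δ) + (β₀/ϑ₁)Π(x⁺ + δ) = 0. Define w = x/θ₀ − ((1 − θ₀)/θ₀)·x⁻, w⁺ = x⁺/θ₁ − ((1 − θ₁)/θ₁)·x, ρ = f(x) − f(x*) + ⟨λ*, Πx⟩, and ρ⁺ = f(x⁺) − f(x*) + ⟨λ*, Πx⁺⟩. Then ρ⁺ + (ϑ₁/(2β₀))‖(β₀/ϑ₁)Πx⁺ − λ*‖²_F + (Lθ₁²/2)‖w⁺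 − x*‖²_F ≤ (1 − θ₁)ρ + (ϑ₁/(2β₀))‖(β₀/ϑ₀)Πx − λ*‖²_F + ε + ((Lθ₁ − μ)θ₁/2)‖w − x*‖²_F + Lθ₁·√(2ε/L)·‖w⁺ − x*‖_F. -/

import Mathlib

open scoped RealInnerProductSpace

/-- The column-average operator `x ↦ (1/m)·1 1ᵀ x` on `ℝ^{m×n}`
(viewed as a Euclidean space with the Frobenius inner product). -/
noncomputable def colAvg (m n : ℕ) (x : EuclideanSpace ℝ (Fin m × Fin n)) :
    EuclideanSpace ℝ (Fin m × Fin n) :=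
  WithLp.toLp 2 (fun p : Fin m × Fin n => (m : ℝ)⁻¹ * ∑ k : Fin m, x (k, p.2))

/-- The operator `Π = I − (1/m)·1 1ᵀ` acting on `ℝ^{m×n}`. -/
noncomputable def cProj (m n : ℕ) (x : EuclideanSpace ℝ (Fin m × Fin n)) :
    EuclideanSpace ℝ (Fin m × Fin n) :=
  x - colAvg m n x

section Proj
variable {m n : ℕ}

lemma colAvg_add (x y : EuclideanSpace ℝ (Fin m × Fin n)) :
    colAvg m n (x + y) = colAvg m n x + colAvg m n y := by
  ext p; simp [colAvg, Finset.sum_add_distrib, mul_add]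

lemma colAvg_smul (c : ℝ) (x : EuclideanSpace ℝ (Fin m × Fin n)) :
    colAvg m n (c • x) = c • colAvg m n x := by
  ext p
  show (m : ℝ)⁻¹ * ∑ k : Fin m, (c • x) (k, p.2) = c * ((m : ℝ)⁻¹ * ∑ k : Fin m, x (k, p.2))
  have : ∀ k : Fin m, (c • x) (k, p.2) = c * x (k, p.2) := fun k => rfl
  simp only [this, ← Finset.mul_sum]
  ring

lemma cProj_add (x y : EuclideanSpace ℝ (Fin m × Fin n)) :
    cProj m n (x + y) = cProj m n x + cProj m n y := by
  simp only [cProj, colAvg_add]; abel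

lemma cProj_smul (c : ℝ) (x : EuclideanSpace ℝ (Fin m × Fin n)) :
    cProj m n (c • x) = c • cProj m n x := by
  simp only [cProj, colAvg_smul, smul_sub]

lemma cProj_sub (x y : EuclideanSpace ℝ (Fin m × Fin n)) :
    cProj m n (x - y) = cProj m n x - cProj m n y := by
  have h : x - y = x + (-1 : ℝ) • y := by module
  rw [h, cProj_add, cProj_smul]; module

lemma inner_colAvg (x y : EuclideanSpace ℝ (Fin m × Fin n)) :
    ⟪colAvg m n x, y⟫ = ⟪x, colAvg m n y⟫ := by
  simp only [PiLp.inner_apply, RCLike.inner_apply, starRingEnd_apply, star_trivial]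
  show (∑ p : Fin m × Fin n, y p * ((m : ℝ)⁻¹ * ∑ k : Fin m, x (k, p.2)))
      = ∑ p : Fin m × Fin n, ((m : ℝ)⁻¹ * ∑ k : Fin m, y (k, p.2)) * x p
  symm
  rw [Fintype.sum_prod_type, Fintype.sum_prod_type]
  rw [Finset.sum_comm, Finset.sum_comm (s := Finset.univ) (t := Finset.univ)
    (f := fun i j => y (i, j) * ((m : ℝ)⁻¹ * ∑ k : Fin m, x (k, j)))]
  refine Finset.sum_congr rfl fun j _ => ?_
  simp only [Finset.mul_sum, Finset.sum_mul]
  rw [Finset.sum_comm]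
  refine Finset.sum_congr rfl fun i _ => Finset.sum_congr rfl fun k _ => ?_
  ring

lemma colAvg_colAvg (hm : 0 < m) (x : EuclideanSpace ℝ (Fin m × Fin n)) :
    colAvg m n (colAvg m n x) = colAvg m n x := by
  ext p
  show (m : ℝ)⁻¹ * ∑ k : Fin m, ((m : ℝ)⁻¹ * ∑ l : Fin m, x (l, p.2))
      = (m : ℝ)⁻¹ * ∑ k : Fin m, x (k, p.2)
  rw [Finset.sum_const, Finset.card_univ, Fintype.card_fin]
  have : (m : ℝ) ≠ 0 := Nat.cast_ne_zero.mpr hm.ne'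
  field_simp
  rw [nsmul_eq_mul]
  field_simp

lemma colAvg_sub (x y : EuclideanSpace ℝ (Fin m × Fin n)) :
    colAvg m n (x - y) = colAvg m n x - colAvg m n y := by
  have h : x - y = x + (-1 : ℝ) • y := by module
  rw [h, colAvg_add, colAvg_smul]; module

lemma colAvg_cProj (hm : 0 < m) (x : EuclideanSpace ℝ (Fin m × Fin n)) :
    colAvg m n (cProj m n x) = 0 := by
  rw [cProj, colAvg_sub, colAvg_colAvg hm, sub_self]

lemma cProj_cProj (hm : 0 < m) (x : EuclideanSpace ℝ (Fin m × Fin n)) :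
    cProj m n (cProj m n x) = cProj m n x := by
  conv_lhs => rw [cProj, colAvg_cProj hm]
  rw [sub_zero]

lemma inner_cProj (x y : EuclideanSpace ℝ (Fin m × Fin n)) :
    ⟪cProj m n x, y⟫ = ⟪x, cProj m n y⟫ := by
  simp only [cProj, inner_sub_left, inner_sub_right, inner_colAvg]

lemma inner_cProj_cProj (hm : 0 < m) (x y : EuclideanSpace ℝ (Fin m × Fin n)) :
    ⟪cProj m n x, y⟫ = ⟪cProj m n x, cProj m n y⟫ := by
  conv_rhs => rw [inner_cProj, cProj_cProj hm]
  rw [inner_cProj]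

end Proj

section Aux
variable {V : Type*} [NormedAddCommGroup V] [InnerProductSpace ℝ V]

lemma three_point (a b c : V) :
    ⟪a - c, a - b⟫ = (‖a - c‖ ^ 2 + ‖a - b‖ ^ 2 - ‖b - c‖ ^ 2) / 2 := by
  have h := norm_sub_sq_real (a - c) (a - b)
  have h2 : a - c - (a - b) = b - c := by abel
  rw [h2] at h; linarith

lemma young_eq (c : ℝ) (hc : 0 < c) (u v : V) :
    -⟪u, v⟫ = c / 2 * ‖u‖ ^ 2 + 1 / (2 * c) * ‖v‖ ^ 2 - 1 / (2 * c) * ‖c • u + v‖ ^ 2 := by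
  have h := norm_add_sq_real (c • u) v
  have hn : ‖c • u‖ ^ 2 = c ^ 2 * ‖u‖ ^ 2 := by
    rw [norm_smul, Real.norm_eq_abs, mul_pow, sq_abs]
  rw [hn, real_inner_smul_left] at h
  have hc' : c ≠ 0 := hc.ne'
  rw [h]
  field_simp
  ring

end Aux

lemma estar_abs {V : Type*} [NormedAddCommGroup V] [InnerProductSpace ℝ V]
    (L μ θ₁ α : ℝ) (hα : α * (L - μ) = L * θ₁ - μ) (A D C : V) :
    θ₁ * L * ⟪θ₁ • A + α • D - θ₁ • C, C⟫ + (L / 2) * ‖θ₁ • C - θ₁ • A - α • D‖ ^ 2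
      - (μ / 2) * ((1 - θ₁) * ‖-(α • D)‖ ^ 2 + θ₁ * ‖-(A + α • D)‖ ^ 2)
      = -(L * θ₁ ^ 2 / 2) * ‖C‖ ^ 2 + ((L * θ₁ - μ) * θ₁ / 2) * ‖A + D‖ ^ 2
        + ((L * θ₁ - μ) * (α - θ₁) / 2) * ‖D‖ ^ 2 := by
  simp only [← real_inner_self_eq_norm_sq]
  simp only [inner_sub_left, inner_sub_right, inner_add_left, inner_add_right,
    real_inner_smul_left, real_inner_smul_right, inner_neg_left, inner_neg_right]
  simp only [real_inner_comm C A, real_inner_comm D A, real_inner_comm D C]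
  linear_combination (θ₁ * ⟪A, D⟫ + α / 2 * ⟪D, D⟫) * hα - (θ₁ * L * α - θ₁ * α * μ + θ₁ * μ - θ₁ ^ 2 * L) * real_inner_comm D A

set_option maxHeartbeats 1000000 in
theorem stmt6 (m n : ℕ) (hm : 0 < m) (L μ : ℝ) (hμ : 0 ≤ μ) (hμL : μ < L)
    (f : EuclideanSpace ℝ (Fin m × Fin n) → ℝ)
    (gf : EuclideanSpace ℝ (Fin m × Fin n) → EuclideanSpace ℝ (Fin m × Fin n))
    -- `f` is `L`-smooth with gradient `gf`
    (hsmooth : ∀ a b, f b ≤ f a + ⟪gf a, b - a⟫ + (L / 2) * ‖b - a‖ ^ 2)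
    -- `f` is `μ`-strongly convex with gradient `gf`
    (hsconv : ∀ a b, f a + ⟪gf a, b - a⟫ + (μ / 2) * ‖b - a‖ ^ 2 ≤ f b)
    (β₀ ε θ₀ θ₁ ϑ₀ ϑ₁ : ℝ)
    (hβ₀ : 0 < β₀) (hε : 0 ≤ ε)
    (hθ₀ : 0 < θ₀) (hθ₀' : θ₀ ≤ 1) (hθ₁ : 0 < θ₁) (hθ₁' : θ₁ ≤ 1)
    (hθ₁μ : μ / L ≤ θ₁) (hϑ₀ : 0 < ϑ₀) (hϑ₁ : 0 < ϑ₁)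
    (hϑ : (1 - θ₁) / ϑ₁ = 1 / ϑ₀)
    (xs lam : EuclideanSpace ℝ (Fin m × Fin n))
    (hxs : cProj m n xs = 0) (hlam : gf xs + cProj m n lam = 0)
    (xm x y z xp δ w wp : EuclideanSpace ℝ (Fin m × Fin n))
    (hy : y = x + (((L * θ₁ - μ) / (L - μ)) * ((1 - θ₀) / θ₀)) • (x - xm))
    (hz : z = y - L⁻¹ • gf y)
    (hδ1 : ‖δ‖ ≤ Real.sqrt (2 * ε / L))
    (hδ2 : (β₀ / ϑ₁) * ‖cProj m n δ‖ ^ 2 ≤ 2 * ε)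
    (hopt : L • (xp - z + δ) + (β₀ / ϑ₁) • cProj m n (xp + δ) = 0)
    (hw : w = θ₀⁻¹ • x - ((1 - θ₀) / θ₀) • xm)
    (hwp : wp = θ₁⁻¹ • xp - ((1 - θ₁) / θ₁) • x)
    (ρ ρp : ℝ)
    (hρ : ρ = f x - f xs + ⟪lam, cProj m n x⟫)
    (hρp : ρp = f xp - f xs + ⟪lam, cProj m n xp⟫) :
    ρp + (ϑ₁ / (2 * β₀)) * ‖(β₀ / ϑ₁) • cProj m n xp - lam‖ ^ 2
        + (L * θ₁ ^ 2 / 2) * ‖wp - xs‖ ^ 2 ≤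
      (1 - θ₁) * ρ + (ϑ₁ / (2 * β₀)) * ‖(β₀ / ϑ₀) • cProj m n x - lam‖ ^ 2 + ε
        + ((L * θ₁ - μ) * θ₁ / 2) * ‖w - xs‖ ^ 2
        + L * θ₁ * Real.sqrt (2 * ε / L) * ‖wp - xs‖ := by
  
  have hL : (0 : ℝ) < L := lt_of_le_of_lt hμ hμL
  have hLne : L ≠ 0 := hL.ne'
  have hLμne : L - μ ≠ 0 := sub_ne_zero.mpr hμL.ne'
  set s := Real.sqrt (2 * ε / L) with hsdef
  set α := (L * θ₁ - μ) / (L - μ) with hαdef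
  set lt := (β₀ / ϑ₁) • cProj m n (xp + δ) with hltdef
  set lp := (β₀ / ϑ₁) • cProj m n xp with hlpdef
  set lmb := (β₀ / ϑ₀) • cProj m n x with hlmbdef
  -- scalar facts
  have hϑ' : ϑ₁ / ϑ₀ = 1 - θ₁ := by
    field_simp at hϑ ⊢
    linarith
  have hLθμ : 0 ≤ L * θ₁ - μ := by
    have := (div_le_iff₀ hL).mp hθ₁μ
    linarith
  have hαθ : α ≤ θ₁ := by
    rw [hαdef, div_le_iff₀ (by linarith)]
    nlinarith [mul_nonneg (sub_nonneg.mpr hθ₁') hμ]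
  -- basic vector identities
  have hwx : w - x = ((1 - θ₀) / θ₀) • (x - xm) := by
    have hθexp : θ₀⁻¹ = (1 - θ₀) / θ₀ + 1 := by field_simp; ring
    rw [hw, hθexp]; module
  have hyx : y - x = α • (w - x) := by
    rw [hy, hwx]; module
  have hy' : y = α • (w - x) + x := sub_eq_iff_eq_add.mp hyx
  have hxp : xp = θ₁ • wp + (1 - θ₁) • x := by
    have d1 : θ₁ * θ₁⁻¹ = 1 := mul_inv_cancel₀ hθ₁.ne'
    have d2 : θ₁ * ((1 - θ₁) / θ₁) = 1 - θ₁ := by field_simp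
    rw [hwp, smul_sub, smul_smul, smul_smul, d1, d2, one_smul]; module
  have hv1 : xp - y = θ₁ • (wp - xs) - θ₁ • (x - xs) - α • (w - x) := by
    rw [hxp, hy']; module
  have hv2 : x - y = -(α • (w - x)) := by rw [hy']; module
  have hv3 : xs - y = -((x - xs) + α • (w - x)) := by rw [hy']; module
  have hv4 : w - xs = (x - xs) + (w - x) := by module
  have hv5 : y - xp = θ₁ • (x - xs) + α • (w - x) - θ₁ • (wp - xs) := by
    rw [hxp, hy']; module
  -- gradient identities
  have hgy : gf y = L • (y - z) := by
    have h1 : y - (y - L⁻¹ • gf y) = L⁻¹ • gf y := by module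
    rw [hz, h1, smul_smul, mul_inv_cancel₀ hLne, one_smul]
  have hlt0 : lt = -(L • (xp - z + δ)) := (neg_eq_of_add_eq_zero_right hopt).symm
  have hgy2 : gf y = L • (y - xp) - L • δ - lt := by
    rw [hgy, hlt0]; module
  -- dual vector identities
  have hwpxs : θ₁ • (wp - xs) = xp - (1 - θ₁) • x - θ₁ • xs := by
    rw [hxp]; module
  have hV1 : θ₁ • cProj m n (wp - xs) = cProj m n xp - (1 - θ₁) • cProj m n x := by
    rw [← cProj_smul, hwpxs, cProj_sub, cProj_sub, cProj_smul, cProj_smul, hxs]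
    module
  have hV2 : θ₁ • cProj m n (wp - xs) = (ϑ₁ / β₀) • (lp - lmb) := by
    have c1 : (ϑ₁ / β₀) * (β₀ / ϑ₁) = 1 := by field_simp
    have c2 : (ϑ₁ / β₀) * (β₀ / ϑ₀) = 1 - θ₁ := by
      rw [← hϑ']; field_simp
    rw [hV1, hlpdef, hlmbdef, smul_sub, smul_smul, smul_smul, c1, c2, one_smul]
  have hlt2 : lt = lp + (β₀ / ϑ₁) • cProj m n δ := by
    rw [hltdef, hlpdef, cProj_add]; module
  -- scalar equalities
  have hvsplit : xp - y = (1 - θ₁) • (x - y) + θ₁ • (xs - y) + θ₁ • (wp - xs) := by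
    rw [hxp]; module
  have e_split : ⟪gf y, xp - y⟫ = (1 - θ₁) * ⟪gf y, x - y⟫ + θ₁ * ⟪gf y, xs - y⟫
      + θ₁ * ⟪gf y, wp - xs⟫ := by
    rw [hvsplit, inner_add_right, inner_add_right, real_inner_smul_right,
      real_inner_smul_right, real_inner_smul_right]
  have e_g : ⟪gf y, wp - xs⟫ = L * ⟪y - xp, wp - xs⟫ - L * ⟪δ, wp - xs⟫
      - ⟪lt, wp - xs⟫ := by
    rw [hgy2]
    simp only [inner_sub_left, real_inner_smul_left]
  have e_lam : ⟪lam, cProj m n xp⟫ - (1 - θ₁) * ⟪lam, cProj m n x⟫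
      = θ₁ * ⟪lam, cProj m n (wp - xs)⟫ := by
    have h := congrArg (fun v => ⟪lam, v⟫) hV1
    simp only [inner_sub_right, real_inner_smul_right] at h
    linarith
  have hi : ⟪lt, wp - xs⟫ = ⟪lt, cProj m n (wp - xs)⟫ := by
    rw [hltdef, real_inner_smul_left, real_inner_smul_left,
      inner_cProj_cProj hm (xp + δ) (wp - xs)]
  have e_dual : θ₁ * ⟪lam, cProj m n (wp - xs)⟫ - θ₁ * ⟪lt, wp - xs⟫
      = -(ϑ₁ / β₀) * ⟪lp - lam, lp - lmb⟫ - ⟪cProj m n δ, lp - lmb⟫ := by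
    rw [hi]
    have h3 : θ₁ * ⟪lam, cProj m n (wp - xs)⟫ - θ₁ * ⟪lt, cProj m n (wp - xs)⟫
        = ⟪lam - lt, θ₁ • cProj m n (wp - xs)⟫ := by
      simp only [inner_sub_left, real_inner_smul_right]
    rw [h3, hV2, hlt2]
    have hcc : β₀ / ϑ₁ * (ϑ₁ / β₀) = 1 := by field_simp
    simp only [inner_sub_left, inner_add_left, real_inner_smul_left, real_inner_smul_right]
    linear_combination (-⟪cProj m n δ, lp - lmb⟫) * hcc
  have e3 : ⟪lp - lam, lp - lmb⟫
      = (‖lp - lam‖ ^ 2 + ‖lp - lmb‖ ^ 2 - ‖lmb - lam‖ ^ 2) / 2 := three_point lp lmb lam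
  have eY : -⟪cProj m n δ, lp - lmb⟫ = (β₀ / ϑ₁) / 2 * ‖cProj m n δ‖ ^ 2
      + 1 / (2 * (β₀ / ϑ₁)) * ‖lp - lmb‖ ^ 2
      - 1 / (2 * (β₀ / ϑ₁)) * ‖(β₀ / ϑ₁) • cProj m n δ + (lp - lmb)‖ ^ 2 :=
    young_eq _ (div_pos hβ₀ hϑ₁) _ _
  have hco : 1 / (2 * (β₀ / ϑ₁)) = ϑ₁ / (2 * β₀) := by
    rw [div_eq_div_iff (by positivity) (by positivity)]; field_simp
  rw [hco] at eY
  have estar : θ₁ * L * ⟪y - xp, wp - xs⟫ + (L / 2) * ‖xp - y‖ ^ 2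
      - (μ / 2) * ((1 - θ₁) * ‖x - y‖ ^ 2 + θ₁ * ‖xs - y‖ ^ 2)
      = -(L * θ₁ ^ 2 / 2) * ‖wp - xs‖ ^ 2 + ((L * θ₁ - μ) * θ₁ / 2) * ‖w - xs‖ ^ 2
        + ((L * θ₁ - μ) * (α - θ₁) / 2) * ‖w - x‖ ^ 2 := by
    have hα : α * (L - μ) = L * θ₁ - μ := by
      rw [hαdef]; field_simp
    rw [hv5, hv1, hv2, hv3, hv4]
    exact estar_abs L μ θ₁ α hα (x - xs) (w - x) (wp - xs)
  have hkey : ρp + (ϑ₁ / (2 * β₀)) * ‖lp - lam‖ ^ 2 + (L * θ₁ ^ 2 / 2) * ‖wp - xs‖ ^ 2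
      - ((1 - θ₁) * ρ + (ϑ₁ / (2 * β₀)) * ‖lmb - lam‖ ^ 2 + ε
        + ((L * θ₁ - μ) * θ₁ / 2) * ‖w - xs‖ ^ 2 + L * θ₁ * s * ‖wp - xs‖)
      = (f xp - f y - ⟪gf y, xp - y⟫ - (L / 2) * ‖xp - y‖ ^ 2)
      + (1 - θ₁) * ((f y + ⟪gf y, x - y⟫ + (μ / 2) * ‖x - y‖ ^ 2) - f x)
      + θ₁ * ((f y + ⟪gf y, xs - y⟫ + (μ / 2) * ‖xs - y‖ ^ 2) - f xs)
      + (-(ϑ₁ / (2 * β₀)) * ‖(β₀ / ϑ₁) • cProj m n δ + (lp - lmb)‖ ^ 2)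
      + (1 / 2) * ((β₀ / ϑ₁) * ‖cProj m n δ‖ ^ 2 - 2 * ε)
      + θ₁ * L * (-⟪δ, wp - xs⟫ - s * ‖wp - xs‖)
      + ((L * θ₁ - μ) * (α - θ₁) / 2) * ‖w - x‖ ^ 2 := by
    have hβϑ : β₀ ≠ 0 := hβ₀.ne'
    have hϑ₁ne : ϑ₁ ≠ 0 := hϑ₁.ne'
    linear_combination hρp - (1 - θ₁) * hρ + e_split + θ₁ * e_g + e_lam + e_dual
      - (ϑ₁ / β₀) * e3 + eY + estar
  -- the seven nonpositive terms
  have hT1 : f xp - f y - ⟪gf y, xp - y⟫ - (L / 2) * ‖xp - y‖ ^ 2 ≤ 0 := by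
    have := hsmooth y xp; linarith
  have hT2 : (1 - θ₁) * ((f y + ⟪gf y, x - y⟫ + (μ / 2) * ‖x - y‖ ^ 2) - f x) ≤ 0 :=
    mul_nonpos_of_nonneg_of_nonpos (by linarith) (by have := hsconv y x; linarith)
  have hT3 : θ₁ * ((f y + ⟪gf y, xs - y⟫ + (μ / 2) * ‖xs - y‖ ^ 2) - f xs) ≤ 0 :=
    mul_nonpos_of_nonneg_of_nonpos hθ₁.le (by have := hsconv y xs; linarith)
  have hT4 : -(ϑ₁ / (2 * β₀)) * ‖(β₀ / ϑ₁) • cProj m n δ + (lp - lmb)‖ ^ 2 ≤ 0 := by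
    have h1 : 0 ≤ (ϑ₁ / (2 * β₀)) * ‖(β₀ / ϑ₁) • cProj m n δ + (lp - lmb)‖ ^ 2 := by
      positivity
    linarith
  have hT5 : (1 / 2) * ((β₀ / ϑ₁) * ‖cProj m n δ‖ ^ 2 - 2 * ε) ≤ 0 := by linarith
  have hT6 : θ₁ * L * (-⟪δ, wp - xs⟫ - s * ‖wp - xs‖) ≤ 0 := by
    refine mul_nonpos_of_nonneg_of_nonpos (mul_nonneg hθ₁.le hL.le) ?_
    have h1 : -⟪δ, wp - xs⟫ ≤ ‖δ‖ * ‖wp - xs‖ := by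
      have := abs_real_inner_le_norm δ (wp - xs)
      have := abs_le.mp this
      linarith
    have h2 : ‖δ‖ * ‖wp - xs‖ ≤ s * ‖wp - xs‖ :=
      mul_le_mul_of_nonneg_right hδ1 (norm_nonneg _)
    linarith
  have hT7 : ((L * θ₁ - μ) * (α - θ₁) / 2) * ‖w - x‖ ^ 2 ≤ 0 := by
    refine mul_nonpos_of_nonpos_of_nonneg ?_ (sq_nonneg _)
    have := mul_nonpos_of_nonneg_of_nonpos hLθμ (sub_nonpos.mpr hαθ)
    linarith
  linarith [hkey, hT1, hT2, hT3, hT4, hT5, hT6, hT7]
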